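/- arXiv:1807.06692 — 2 statements merged into one kernel-verified Lean document; each statement's English description precedes it below -/
import Mathlib

section
/- There exists a constant C ≥ 1 such that for every positive integer n divisible by 6 there are a subset V of G_n = Z_2 ≀ Z_n, a number r > 0, and a bijection ψ from the vertex set of the binary tree T_{n/3} onto V satisfying r·d_T(s,s') ≤ ρ(ψ(s),ψ(s')) ≤ C·r·d_T(s,s') for all vertices s, s' of T_{n/3}. That is, the Cayley graph of Z_2 ≀ Z_n with generating set {t, ta} contains a subset bilipschitz equivalent to a binary tree of depth proportional to n, with distortion bounded by an absolute constant independent of n. -/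
open scoped symmDiff

/-- Elements of the lamplighter group `Z₂ ≀ Z_n`: a set of lit lamps and a position. -/
abbrev Lamp (n : ℕ) := Set (ZMod n) × ZMod n

/-- Group multiplication `(x,g)·(y,h) = (x △ (g+y), g+h)`. -/
def lampMul {n : ℕ} (u v : Lamp n) : Lamp n :=
  (u.1 ∆ ((u.2 + ·) '' v.1), u.2 + v.2)

/-- Group inverse in the lamplighter group. -/
def lampInv {n : ℕ} (u : Lamp n) : Lamp n :=
  ((· - u.2) '' u.1, -u.2)

/-- The generator `t = (∅, 1)`. -/
def lampT (n : ℕ) : Lamp n := (∅, 1)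

/-- The generator `a = ({0}, 0)`. -/
def lampA (n : ℕ) : Lamp n := ({0}, 0)

/-- The generator `ta`. -/
def lampTA (n : ℕ) : Lamp n := lampMul (lampT n) (lampA n)

/-- Word metric w.r.t. a generating set `S`: the least `m` such that `u⁻¹v`
is a product of `m` elements of `S ∪ S⁻¹`, i.e. `v = u·s₁⋯s_m`. -/
noncomputable def wordDist {n : ℕ} (S : Set (Lamp n)) (u v : Lamp n) : ℕ :=
  sInf {m | ∃ w : List (Lamp n), w.length = m ∧
    (∀ s ∈ w, s ∈ S ∨ ∃ g ∈ S, s = lampInv g) ∧ v = w.foldl lampMul u}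

/-- The word metric `ρ` on `Z₂ ≀ Z_n` w.r.t. the generating set `{t, ta}`. -/
noncomputable def lampDist (n : ℕ) (u v : Lamp n) : ℕ :=
  wordDist {lampT n, lampTA n} u v

/-- Length of the longest common prefix of two vertices of the binary tree. -/
def lgc : List Bool → List Bool → ℕ
  | a :: as, b :: bs => if a = b then lgc as bs + 1 else 0
  | _, _ => 0

/-- Graph distance in the binary tree (vertices = `{0,1}`-sequences). -/
def treeDist (A B : List Bool) : ℕ := A.length + B.length - 2 * lgc A B

/-- The arc `{a, a+1, ..., a+m}` in `Z_n`. -/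
def arcSet (n : ℕ) (a : ZMod n) (m : ℕ) : Set (ZMod n) :=
  {z | ∃ i ≤ m, z = a + (i : ZMod n)}

/-- The arc `P₁ = {n/6, ..., 5n/6}` of `Z_n` (identified with `{0,...,n-1}` via `val`). -/
def P1set (n : ℕ) : Set (ZMod n) := {z | n / 6 ≤ z.val ∧ z.val ≤ 5 * n / 6}

/-- The subset `P_{1,n} = {(x,k) ∈ G_n : k ∈ P₁}`. -/
def lampP1 (n : ℕ) : Set (Lamp n) := {u | u.2 ∈ P1set n}

/-- The set `W_n ⊆ T_n × T_n`. -/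
def Wset (n : ℕ) : Set (List Bool × List Bool) :=
  {p | p.1.length + p.2.length = n ∧ n / 6 ≤ p.1.length ∧ p.1.length ≤ 5 * n / 6}

open Classical in
/-- The map `φ_{1,n} : P_{1,n} → W_n`. -/
noncomputable def phi1 (n : ℕ) (u : Lamp n) : List Bool × List Bool :=
  ((List.range u.2.val).map fun j => if ((j : ℕ) : ZMod n) ∈ u.1 then true else false,
   (List.range (n - u.2.val)).map fun i => if ((n - 1 - i : ℕ) : ZMod n) ∈ u.1 then true else false)

/-- "X admits an equivalent uniformly convex norm" (= superreflexivity, by Enflo). -/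
def HasEquivUnifConvexNorm (X : Type*) [NormedAddCommGroup X] [NormedSpace ℝ X] : Prop :=
  ∃ N : X → ℝ,
    (∀ x, N x = 0 ↔ x = 0) ∧
    (∀ (c : ℝ) (x : X), N (c • x) = |c| * N x) ∧
    (∀ x y, N (x + y) ≤ N x + N y) ∧
    (∃ c₁ > (0 : ℝ), ∃ c₂ > (0 : ℝ), ∀ x, c₁ * ‖x‖ ≤ N x ∧ N x ≤ c₂ * ‖x‖) ∧
    (∀ ε > (0 : ℝ), ∃ δ > (0 : ℝ), ∀ x y,
      N x ≤ 1 → N y ≤ 1 → ε ≤ N (x - y) → N (x + y) ≤ 2 - δ)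

-- ===== auxiliary development, part 1 =====

section Aux
variable {n : ℕ}

/-- The four generators. -/
def IsGen (n : ℕ) (s : Lamp n) : Prop :=
  s = lampT n ∨ s = lampTA n ∨ s = lampInv (lampT n) ∨ s = lampInv (lampTA n)

lemma lampTA_eq : lampTA n = ({1}, 1) := by
  unfold lampTA lampMul lampT lampA
  refine Prod.ext ?_ (by simp)
  show (∅ : Set (ZMod n)) ∆ ((1 + ·) '' {0}) = {1}
  rw [Set.image_singleton]
  simp [symmDiff_def]

lemma lampTinv_eq : lampInv (lampT n) = (∅, -1) := by
  unfold lampInv lampT; simp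

lemma lampTAinv_eq : lampInv (lampTA n) = ({0}, -1) := by
  rw [lampTA_eq]; unfold lampInv
  refine Prod.ext ?_ (by simp)
  show (· - (1:ZMod n)) '' {1} = {0}
  rw [Set.image_singleton]; simp

lemma mul_t (u : Lamp n) : lampMul u (lampT n) = (u.1, u.2 + 1) := by
  unfold lampMul lampT
  refine Prod.ext ?_ (by simp)
  show u.1 ∆ ((u.2 + ·) '' ∅) = u.1
  simp [symmDiff_def]

lemma mul_ta (u : Lamp n) : lampMul u (lampTA n) = (u.1 ∆ {u.2 + 1}, u.2 + 1) := by
  rw [lampTA_eq]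
  unfold lampMul
  refine Prod.ext ?_ (by simp)
  show u.1 ∆ ((u.2 + ·) '' {1}) = u.1 ∆ {u.2 + 1}
  rw [Set.image_singleton]

lemma mul_tinv (u : Lamp n) : lampMul u (lampInv (lampT n)) = (u.1, u.2 - 1) := by
  rw [lampTinv_eq]
  unfold lampMul
  refine Prod.ext ?_ (by simp [sub_eq_add_neg])
  show u.1 ∆ ((u.2 + ·) '' ∅) = u.1
  simp [symmDiff_def]

lemma mul_tainv (u : Lamp n) : lampMul u (lampInv (lampTA n)) = (u.1 ∆ {u.2}, u.2 - 1) := by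
  rw [lampTAinv_eq]
  unfold lampMul
  refine Prod.ext ?_ (by simp [sub_eq_add_neg])
  show u.1 ∆ ((u.2 + ·) '' {0}) = u.1 ∆ {u.2}
  rw [Set.image_singleton]; simp

/-- Cyclic distance on `ZMod n`. -/
def zdist {n : ℕ} (a b : ZMod n) : ℕ := min (b - a).val (a - b).val

lemma zdist_comm (a b : ZMod n) : zdist a b = zdist b a := min_comm _ _

lemma zdist_self (a : ZMod n) : zdist a a = 0 := by
  simp [zdist]

lemma zdist_key [NeZero n] (x y : ZMod n) :
    min ((x - y).val) ((y - x).val) ≤ x.val + y.val := by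
  rcases le_total y.val x.val with h | h
  · calc min ((x - y).val) ((y - x).val) ≤ (x - y).val := min_le_left _ _
      _ = x.val - y.val := ZMod.val_sub h
      _ ≤ x.val + y.val := by omega
  · calc min ((x - y).val) ((y - x).val) ≤ (y - x).val := min_le_right _ _
      _ = y.val - x.val := ZMod.val_sub h
      _ ≤ x.val + y.val := by omega

lemma zdist_triangle [NeZero n] (a b c : ZMod n) :
    zdist a c ≤ zdist a b + zdist b c := by
  unfold zdist
  rcases le_total ((b - a).val) ((a - b).val) with h1 | h1 <;>
    rcases le_total ((c - b).val) ((b - c).val) with h2 | h2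
  · rw [min_eq_left h1, min_eq_left h2]
    calc min ((c - a).val) ((a - c).val) ≤ (c - a).val := min_le_left _ _
      _ = ((c - b) + (b - a)).val := by ring_nf
      _ ≤ (c - b).val + (b - a).val := ZMod.val_add_le _ _
      _ = (b - a).val + (c - b).val := by omega
  · rw [min_eq_left h1, min_eq_right h2]
    have := zdist_key (b - a) (b - c)
    rw [show b - a - (b - c) = c - a by ring, show b - c - (b - a) = a - c by ring] at this
    omega
  · rw [min_eq_right h1, min_eq_left h2]
    have := zdist_key (c - b) (a - b)
    rw [show c - b - (a - b) = c - a by ring, show a - b - (c - b) = a - c by ring] at this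
    omega
  · rw [min_eq_right h1, min_eq_right h2]
    calc min ((c - a).val) ((a - c).val) ≤ (a - c).val := min_le_right _ _
      _ = ((a - b) + (b - c)).val := by ring_nf
      _ ≤ (a - b).val + (b - c).val := ZMod.val_add_le _ _

lemma zdist_add_one (a : ZMod n) : zdist a (a + 1) ≤ 1 := by
  unfold zdist
  calc min ((a + 1 - a).val) ((a - (a+1)).val) ≤ (a + 1 - a).val := min_le_left _ _
    _ = ((1:ℕ) : ZMod n).val := by norm_num
    _ = 1 % n := ZMod.val_natCast n 1
    _ ≤ 1 := Nat.mod_le _ _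

lemma zdist_sub_one (a : ZMod n) : zdist a (a - 1) ≤ 1 := by
  unfold zdist
  calc min ((a - 1 - a).val) ((a - (a-1)).val) ≤ (a - (a - 1)).val := min_le_right _ _
    _ = ((1:ℕ) : ZMod n).val := by norm_num
    _ = 1 % n := ZMod.val_natCast n 1
    _ ≤ 1 := Nat.mod_le _ _

end Aux

section Aux2
variable {n : ℕ}

/-- Reachability in `m` generator steps; matches the set in `wordDist`. -/
def Reach (n : ℕ) (u v : Lamp n) (m : ℕ) : Prop :=
  ∃ w : List (Lamp n), w.length = m ∧
    (∀ s ∈ w, s ∈ ({lampT n, lampTA n} : Set (Lamp n)) ∨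
      ∃ g ∈ ({lampT n, lampTA n} : Set (Lamp n)), s = lampInv g) ∧
    v = w.foldl lampMul u

lemma lampDist_eq (u v : Lamp n) : lampDist n u v = sInf {m | Reach n u v m} := rfl

lemma isGen_of_cond {s : Lamp n}
    (h : s ∈ ({lampT n, lampTA n} : Set (Lamp n)) ∨
      ∃ g ∈ ({lampT n, lampTA n} : Set (Lamp n)), s = lampInv g) : IsGen n s := by
  rcases h with h | ⟨g, hg, rfl⟩
  · rcases h with h | h
    · exact Or.inl h
    · exact Or.inr (Or.inl h)
  · rcases hg with h | h <;> subst h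
    · exact Or.inr (Or.inr (Or.inl rfl))
    · exact Or.inr (Or.inr (Or.inr rfl))

lemma cond_of_isGen {s : Lamp n} (h : IsGen n s) :
    s ∈ ({lampT n, lampTA n} : Set (Lamp n)) ∨
      ∃ g ∈ ({lampT n, lampTA n} : Set (Lamp n)), s = lampInv g := by
  rcases h with rfl | rfl | rfl | rfl
  · exact Or.inl (Or.inl rfl)
  · exact Or.inl (Or.inr rfl)
  · exact Or.inr ⟨lampT n, Or.inl rfl, rfl⟩
  · exact Or.inr ⟨lampTA n, Or.inr rfl, rfl⟩

lemma reach_trans {u v x : Lamp n} {m m' : ℕ}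
    (h1 : Reach n u v m) (h2 : Reach n v x m') : Reach n u x (m + m') := by
  obtain ⟨w1, hl1, hg1, hf1⟩ := h1
  obtain ⟨w2, hl2, hg2, hf2⟩ := h2
  refine ⟨w1 ++ w2, by simp [hl1, hl2], ?_, ?_⟩
  · intro s hs
    rcases List.mem_append.mp hs with h | h
    · exact hg1 s h
    · exact hg2 s h
  · rw [List.foldl_append, ← hf1, hf2]

lemma reach_single {s : Lamp n} (h : IsGen n s) (u : Lamp n) :
    Reach n u (lampMul u s) 1 :=
  ⟨[s], rfl, by intro x hx; simp at hx; subst hx; exact cond_of_isGen h, rfl⟩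

lemma mul_cancel {s : Lamp n} (h : IsGen n s) (u : Lamp n) :
    ∃ s' : Lamp n, IsGen n s' ∧ lampMul (lampMul u s) s' = u := by
  rcases h with rfl | rfl | rfl | rfl
  · refine ⟨lampInv (lampT n), Or.inr (Or.inr (Or.inl rfl)), ?_⟩
    rw [mul_t, mul_tinv]
    simp
  · refine ⟨lampInv (lampTA n), Or.inr (Or.inr (Or.inr rfl)), ?_⟩
    rw [mul_ta, mul_tainv]
    refine Prod.ext ?_ (by simp)
    show (u.1 ∆ {u.2 + 1}) ∆ {u.2 + 1} = u.1
    exact symmDiff_symmDiff_cancel_right _ _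
  · refine ⟨lampT n, Or.inl rfl, ?_⟩
    rw [mul_tinv, mul_t]
    simp
  · refine ⟨lampTA n, Or.inr (Or.inl rfl), ?_⟩
    rw [mul_tainv, mul_ta]
    refine Prod.ext ?_ (by simp)
    show (u.1 ∆ {u.2}) ∆ {u.2 - 1 + 1} = u.1
    rw [sub_add_cancel]
    exact symmDiff_symmDiff_cancel_right _ _

lemma reach_symm_aux : ∀ (w : List (Lamp n)), (∀ s ∈ w, IsGen n s) →
    ∀ u : Lamp n, Reach n (w.foldl lampMul u) u w.length := by
  intro w
  induction w with
  | nil => intro _ u; exact ⟨[], rfl, by simp, rfl⟩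
  | cons s w ih =>
    intro hw u
    have hs : IsGen n s := hw s List.mem_cons_self
    have hgw : ∀ x ∈ w, IsGen n x := fun x hx => hw x (List.mem_cons_of_mem _ hx)
    have h1 : Reach n ((s :: w).foldl lampMul u) (lampMul u s) w.length := by
      simpa using ih hgw (lampMul u s)
    obtain ⟨s', hs', hc⟩ := mul_cancel hs u
    have h2 : Reach n (lampMul u s) u 1 := by
      have := reach_single hs' (lampMul u s)
      rwa [hc] at this
    simpa [List.length_cons] using reach_trans h1 h2

lemma reach_symm {u v : Lamp n} {m : ℕ} (h : Reach n u v m) : Reach n v u m := by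
  obtain ⟨w, hl, hg, hf⟩ := h
  have := reach_symm_aux w (fun s hs => isGen_of_cond (hg s hs)) u
  rw [← hf, hl] at this
  exact this

/-- Position moves by at most one per step. -/
lemma pos_le [NeZero n] : ∀ (w : List (Lamp n)), (∀ s ∈ w, IsGen n s) →
    ∀ u : Lamp n, zdist u.2 ((w.foldl lampMul u).2) ≤ w.length := by
  intro w
  induction w with
  | nil => intro _ u; simp [zdist_self]
  | cons s w ih =>
    intro hw u
    have hs : IsGen n s := hw s List.mem_cons_self
    have hgw : ∀ x ∈ w, IsGen n x := fun x hx => hw x (List.mem_cons_of_mem _ hx)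
    have h1 : zdist u.2 (lampMul u s).2 ≤ 1 := by
      rcases hs with rfl | rfl | rfl | rfl
      · rw [mul_t]; exact zdist_add_one _
      · rw [mul_ta]; exact zdist_add_one _
      · rw [mul_tinv]; exact zdist_sub_one _
      · rw [mul_tainv]; exact zdist_sub_one _
    have h2 := ih hgw (lampMul u s)
    have h3 := zdist_triangle u.2 (lampMul u s).2 ((w.foldl lampMul (lampMul u s)).2)
    simp only [List.foldl_cons, List.length_cons]
    omega

/-- At most one lamp toggles per step. -/
lemma card_le [NeZero n] : ∀ (w : List (Lamp n)), (∀ s ∈ w, IsGen n s) →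
    ∀ u : Lamp n, (u.1 ∆ (w.foldl lampMul u).1).ncard ≤ w.length := by
  intro w
  induction w with
  | nil => intro _ u; simp
  | cons s w ih =>
    intro hw u
    have hs : IsGen n s := hw s List.mem_cons_self
    have hgw : ∀ x ∈ w, IsGen n x := fun x hx => hw x (List.mem_cons_of_mem _ hx)
    set u1 := lampMul u s with hu1
    have hsub : u.1 ∆ ((w.foldl lampMul u1).1) ⊆
        (u.1 ∆ u1.1) ∪ (u1.1 ∆ (w.foldl lampMul u1).1) := by
      intro z hz
      simp only [Set.mem_symmDiff, Set.mem_union] at hz ⊢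
      tauto
    have h1 : (u.1 ∆ u1.1).ncard ≤ 1 := by
      rcases hs with rfl | rfl | rfl | rfl
      · rw [hu1, mul_t]; simp
      · rw [hu1, mul_ta]
        show (u.1 ∆ (u.1 ∆ {u.2 + 1})).ncard ≤ 1
        rw [symmDiff_symmDiff_cancel_left]
        simp
      · rw [hu1, mul_tinv]; simp
      · rw [hu1, mul_tainv]
        show (u.1 ∆ (u.1 ∆ {u.2})).ncard ≤ 1
        rw [symmDiff_symmDiff_cancel_left]
        simp
    have h2 := ih hgw u1
    calc (u.1 ∆ ((s :: w).foldl lampMul u).1).ncard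
        = (u.1 ∆ ((w.foldl lampMul u1).1)).ncard := by rw [List.foldl_cons]
      _ ≤ ((u.1 ∆ u1.1) ∪ (u1.1 ∆ (w.foldl lampMul u1).1)).ncard :=
          Set.ncard_le_ncard hsub (Set.toFinite _)
      _ ≤ (u.1 ∆ u1.1).ncard + (u1.1 ∆ (w.foldl lampMul u1).1).ncard :=
          Set.ncard_union_le _ _
      _ ≤ 1 + w.length := by omega
      _ = (s :: w).length := by simp [List.length_cons]; omega

/-- Any toggled lamp's position is visited by the walk. -/
lemma visit [NeZero n] : ∀ (w : List (Lamp n)), (∀ s ∈ w, IsGen n s) →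
    ∀ (u : Lamp n) (p : ZMod n), p ∈ u.1 ∆ (w.foldl lampMul u).1 →
      zdist u.2 p + zdist p ((w.foldl lampMul u).2) ≤ w.length := by
  intro w
  induction w with
  | nil =>
    intro _ u p hp
    simp at hp
  | cons s w ih =>
    intro hw u p hp
    have hs : IsGen n s := hw s List.mem_cons_self
    have hgw : ∀ x ∈ w, IsGen n x := fun x hx => hw x (List.mem_cons_of_mem _ hx)
    rw [List.foldl_cons] at hp ⊢
    simp only [List.length_cons]
    obtain ⟨u1, hu1⟩ : ∃ u1, lampMul u s = u1 := ⟨_, rfl⟩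
    have hkey : (u1.1 = u.1 ∧ zdist u.2 u1.2 ≤ 1) ∨
        (u1.1 = u.1 ∆ {u.2 + 1} ∧ u1.2 = u.2 + 1) ∨
        (u1.1 = u.1 ∆ {u.2} ∧ u1.2 = u.2 - 1) := by
      subst hu1
      rcases hs with rfl | rfl | rfl | rfl
      · left; rw [mul_t]; exact ⟨rfl, zdist_add_one _⟩
      · right; left; rw [mul_ta]; exact ⟨rfl, rfl⟩
      · left; rw [mul_tinv]; exact ⟨rfl, zdist_sub_one _⟩
      · right; right; rw [mul_tainv]; exact ⟨rfl, rfl⟩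
    rw [hu1] at hp ⊢
    have hzu : zdist u.2 u1.2 ≤ 1 := by
      rcases hkey with ⟨_, h⟩ | ⟨_, h⟩ | ⟨_, h⟩
      · exact h
      · rw [h]; exact zdist_add_one _
      · rw [h]; exact zdist_sub_one _
    by_cases hcase : p ∈ u1.1 ∆ ((w.foldl lampMul u1).1)
    · have h2 := ih hgw u1 p hcase
      have h3 := zdist_triangle u.2 u1.2 p
      omega
    · have hp2 : p ∈ u.1 ∆ u1.1 := by
        simp only [Set.mem_symmDiff] at hp hcase ⊢
        tauto
      have hpos := pos_le w hgw u1
      rcases hkey with ⟨h, _⟩ | ⟨h, h2⟩ | ⟨h, h2⟩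
      · rw [h] at hp2; simp at hp2
      · rw [h, symmDiff_symmDiff_cancel_left] at hp2
        have hpe : p = u.2 + 1 := hp2
        have e1 : zdist u.2 p ≤ 1 := by rw [hpe]; exact zdist_add_one _
        have e2 : zdist p ((w.foldl lampMul u1).2) ≤ w.length := by
          rw [hpe, ← h2]; exact hpos
        omega
      · rw [h, symmDiff_symmDiff_cancel_left] at hp2
        have hpe : p = u.2 := hp2
        have e1 : zdist u.2 p = 0 := by rw [hpe]; exact zdist_self _
        have e2 := zdist_triangle p u1.2 ((w.foldl lampMul u1).2)
        have e3 : zdist p u1.2 ≤ 1 := by rw [hpe]; exact hzu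
        omega

end Aux2

section Aux3
variable {n : ℕ}

lemma lgc_nil_left (B : List Bool) : lgc [] B = 0 := by cases B <;> rfl
lemma lgc_nil_right (A : List Bool) : lgc A [] = 0 := by cases A <;> rfl
lemma lgc_cons (a b : Bool) (as bs : List Bool) :
    lgc (a :: as) (b :: bs) = if a = b then lgc as bs + 1 else 0 := rfl

lemma lgc_comm : ∀ A B : List Bool, lgc A B = lgc B A := by
  intro A
  induction A with
  | nil => intro B; rw [lgc_nil_left, lgc_nil_right]
  | cons a as ih =>
    intro B
    cases B with
    | nil => rw [lgc_nil_left, lgc_nil_right]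
    | cons b bs =>
      rw [lgc_cons, lgc_cons, ih bs]
      by_cases h : a = b
      · simp [h]
      · simp [h, Ne.symm h]

lemma lgc_le_left : ∀ A B : List Bool, lgc A B ≤ A.length := by
  intro A
  induction A with
  | nil => intro B; rw [lgc_nil_left]; simp
  | cons a as ih =>
    intro B
    cases B with
    | nil => rw [lgc_nil_right]; simp
    | cons b bs =>
      rw [lgc_cons]
      by_cases h : a = b
      · simp only [h, if_true, List.length_cons]
        exact Nat.succ_le_succ (ih bs)
      · simp [h]

lemma lgc_le_right (A B : List Bool) : lgc A B ≤ B.length := by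
  rw [lgc_comm]; exact lgc_le_left B A

lemma take_lgc : ∀ A B : List Bool, A.take (lgc A B) = B.take (lgc A B) := by
  intro A
  induction A with
  | nil => intro B; rw [lgc_nil_left]; simp
  | cons a as ih =>
    intro B
    cases B with
    | nil => rw [lgc_nil_right]; simp
    | cons b bs =>
      rw [lgc_cons]
      by_cases h : a = b
      · simp only [h, if_true, List.take_succ_cons]
        rw [ih bs]
      · simp [h]

lemma getD_lgc : ∀ A B : List Bool, lgc A B < A.length → lgc A B < B.length →
    A.getD (lgc A B) false ≠ B.getD (lgc A B) false := by
  intro A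
  induction A with
  | nil => intro B h; simp at h
  | cons a as ih =>
    intro B hA hB
    cases B with
    | nil => simp at hB
    | cons b bs =>
      rw [lgc_cons] at hA hB ⊢
      simp only [List.length_cons] at hA hB
      by_cases h : a = b
      · simp only [h, if_true] at hA hB ⊢
        rw [List.getD_cons_succ, List.getD_cons_succ]
        exact ih bs (by omega) (by omega)
      · simp only [h, if_false]
        rw [List.getD_cons_zero, List.getD_cons_zero]
        exact h

/-- The lamp configuration encoding a tree vertex. -/
def xset (n : ℕ) (K : List Bool) : Set (ZMod n) :=
  {z | (∃ i, i < K.length ∧ z = ((2 * i : ℕ) : ZMod n)) ∨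
       (∃ i, i < K.length ∧ K.getD i false = true ∧ z = ((2 * i + 1 : ℕ) : ZMod n))}

/-- The embedding of tree vertices into the lamplighter group. -/
def psiL (n : ℕ) (K : List Bool) : Lamp n := (xset n K, ((2 * K.length : ℕ) : ZMod n))

lemma cast_inj_lt [NeZero n] {a b : ℕ} (ha : a < n) (hb : b < n)
    (h : ((a : ℕ) : ZMod n) = ((b : ℕ) : ZMod n)) : a = b := by
  have := congrArg ZMod.val h
  rwa [ZMod.val_cast_of_lt ha, ZMod.val_cast_of_lt hb] at this

lemma mem_xset_even [NeZero n] {K : List Bool} (hK : 2 * K.length ≤ n) {j : ℕ}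
    (hj : 2 * j < n) : ((2 * j : ℕ) : ZMod n) ∈ xset n K ↔ j < K.length := by
  constructor
  · rintro (⟨i, hi, hz⟩ | ⟨i, hi, hb, hz⟩)
    · have := cast_inj_lt hj (by omega) hz
      omega
    · have := cast_inj_lt hj (by omega) hz
      omega
  · intro h
    exact Or.inl ⟨j, h, rfl⟩

lemma mem_xset_odd [NeZero n] {K : List Bool} (hK : 2 * K.length ≤ n) {j : ℕ}
    (hj : 2 * j + 1 < n) :
    ((2 * j + 1 : ℕ) : ZMod n) ∈ xset n K ↔ (j < K.length ∧ K.getD j false = true) := by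
  constructor
  · rintro (⟨i, hi, hz⟩ | ⟨i, hi, hb, hz⟩)
    · have := cast_inj_lt hj (by omega) hz
      omega
    · have := cast_inj_lt hj (by omega) hz
      have hij : j = i := by omega
      exact ⟨by omega, by rw [hij]; exact hb⟩
  · rintro ⟨h1, h2⟩
    exact Or.inr ⟨j, h1, h2, rfl⟩

lemma xset_append_union [NeZero n] {K : List Bool} {b : Bool} :
    xset n (K ++ [b]) = (xset n K ∪ {((2 * K.length : ℕ) : ZMod n)}) ∪
      (if b = true then {((2 * K.length + 1 : ℕ) : ZMod n)} else (∅ : Set (ZMod n))) := by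
  ext z
  simp only [xset, Set.mem_setOf_eq, Set.mem_union, Set.mem_singleton_iff,
    List.length_append, List.length_cons, List.length_nil]
  constructor
  · rintro (⟨i, hi, rfl⟩ | ⟨i, hi, hb, rfl⟩)
    · rcases Nat.lt_succ_iff_lt_or_eq.mp (by simpa using hi) with h | h
      · exact Or.inl (Or.inl (Or.inl ⟨i, h, rfl⟩))
      · subst h; exact Or.inl (Or.inr rfl)
    · rcases Nat.lt_succ_iff_lt_or_eq.mp (by simpa using hi) with h | h
      · rw [List.getD_append _ _ _ _ h] at hb
        exact Or.inl (Or.inl (Or.inr ⟨i, h, hb, rfl⟩))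
      · subst h
        rw [List.getD_append_right _ _ _ _ (le_refl _), Nat.sub_self,
          List.getD_cons_zero] at hb
        subst hb
        simp only [if_true]
        exact Or.inr rfl
  · rintro ((h | h) | h)
    · rcases h with ⟨i, hi, rfl⟩ | ⟨i, hi, hb, rfl⟩
      · exact Or.inl ⟨i, by simp; omega, rfl⟩
      · refine Or.inr ⟨i, by simp; omega, ?_, rfl⟩
        rw [List.getD_append _ _ _ _ hi]
        exact hb
    · subst h
      exact Or.inl ⟨K.length, by simp, rfl⟩
    · by_cases hb : b = true
      · rw [if_pos hb] at h
        subst h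
        refine Or.inr ⟨K.length, by simp, ?_, rfl⟩
        rw [List.getD_append_right _ _ _ _ (le_refl _), Nat.sub_self,
          List.getD_cons_zero]
        exact hb
      · rw [if_neg hb] at h
        exact absurd h (Set.notMem_empty z)

lemma xset_append [NeZero n] {K : List Bool} {b : Bool} (hK : 2 * K.length + 1 < n) :
    xset n (K ++ [b]) = (xset n K ∆ {((2 * K.length : ℕ) : ZMod n)}) ∆
      (if b = true then {((2 * K.length + 1 : ℕ) : ZMod n)} else (∅ : Set (ZMod n))) := by
  have h1 : ((2 * K.length : ℕ) : ZMod n) ∉ xset n K := by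
    rw [mem_xset_even (by omega) (by omega)]
    omega
  have hd1 : Disjoint (xset n K) {((2 * K.length : ℕ) : ZMod n)} :=
    Set.disjoint_singleton_right.mpr h1
  have e1 : xset n K ∆ {((2 * K.length : ℕ) : ZMod n)} =
      xset n K ∪ {((2 * K.length : ℕ) : ZMod n)} := by
    rw [hd1.symmDiff_eq_sup]; rfl
  rw [xset_append_union, e1]
  cases b with
  | false => simp [symmDiff_def]
  | true =>
    simp only [if_true]
    have h2 : ((2 * K.length + 1 : ℕ) : ZMod n) ∉
        xset n K ∪ {((2 * K.length : ℕ) : ZMod n)} := by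
      rintro (h | h)
      · rw [mem_xset_odd (by omega) (by omega)] at h
        omega
      · have := cast_inj_lt (show 2*K.length+1 < n by omega) (by omega) h
        omega
    have hd2 : Disjoint (xset n K ∪ {((2 * K.length : ℕ) : ZMod n)})
        {((2 * K.length + 1 : ℕ) : ZMod n)} := Set.disjoint_singleton_right.mpr h2
    have e2 : (xset n K ∪ {((2 * K.length : ℕ) : ZMod n)}) ∆
        {((2 * K.length + 1 : ℕ) : ZMod n)} =
        (xset n K ∪ {((2 * K.length : ℕ) : ZMod n)}) ∪
        {((2 * K.length + 1 : ℕ) : ZMod n)} := by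
      rw [hd2.symmDiff_eq_sup]; rfl
    rw [e2]

lemma asc_step [NeZero n] {K : List Bool} {b : Bool} (hK : 2 * K.length + 1 < n) :
    psiL n (K ++ [b]) = List.foldl lampMul (psiL n K)
      [lampInv (lampT n), lampTA n, if b = true then lampTA n else lampT n, lampT n] := by
  have hpos : ((psiL n K).2 : ZMod n) = ((2 * K.length : ℕ) : ZMod n) := rfl
  cases b with
  | false =>
    simp only [if_neg (by simp : ¬ (false = true))]
    simp only [List.foldl_cons, List.foldl_nil]
    rw [mul_tinv, mul_ta]
    show psiL n (K ++ [false]) =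
      lampMul (lampMul ((xset n K ∆ {(psiL n K).2 - 1 + 1}, (psiL n K).2 - 1 + 1) : Lamp n) (lampT n)) (lampT n)
    rw [mul_t, mul_t]
    refine Prod.ext ?_ ?_
    · show xset n (K ++ [false]) = xset n K ∆ {(psiL n K).2 - 1 + 1}
      rw [xset_append hK, sub_add_cancel, hpos]
      simp
    · show ((2 * (K ++ [false]).length : ℕ) : ZMod n) = (psiL n K).2 - 1 + 1 + 1 + 1
      rw [sub_add_cancel, hpos]
      simp only [List.length_append, List.length_cons, List.length_nil]
      push_cast
      ring
  | true =>
    simp only [if_pos rfl]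
    simp only [List.foldl_cons, List.foldl_nil]
    rw [mul_tinv, mul_ta]
    show psiL n (K ++ [true]) =
      lampMul (lampMul ((xset n K ∆ {(psiL n K).2 - 1 + 1}, (psiL n K).2 - 1 + 1) : Lamp n) (lampTA n)) (lampT n)
    rw [mul_ta, mul_t]
    refine Prod.ext ?_ ?_
    · show xset n (K ++ [true]) =
        (xset n K ∆ {(psiL n K).2 - 1 + 1}) ∆ {(psiL n K).2 - 1 + 1 + 1}
      rw [xset_append hK, sub_add_cancel, hpos]
      simp only [if_pos rfl]
      congr 2
      push_cast
      ring_nf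
    · show ((2 * (K ++ [true]).length : ℕ) : ZMod n) = (psiL n K).2 - 1 + 1 + 1 + 1
      rw [sub_add_cancel, hpos]
      simp only [List.length_append, List.length_cons, List.length_nil]
      push_cast
      ring

end Aux3

section Aux4
variable {n : ℕ}

lemma zdist_cast [NeZero n] {x y : ℕ} (hx : x < n) (hy : y < n) (hyx : y ≤ x) :
    zdist ((x : ℕ) : ZMod n) ((y : ℕ) : ZMod n) = min (x - y) (n - (x - y)) := by
  have v1 : (((x : ℕ) : ZMod n) - ((y : ℕ) : ZMod n)).val = x - y := by
    rw [ZMod.val_sub (by rw [ZMod.val_cast_of_lt hx, ZMod.val_cast_of_lt hy]; exact hyx),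
      ZMod.val_cast_of_lt hx, ZMod.val_cast_of_lt hy]
  by_cases hxy : x = y
  · subst hxy
    unfold zdist
    rw [sub_self, ZMod.val_zero]
    simp
  · unfold zdist
    have hne0 : (((x : ℕ) : ZMod n) - ((y : ℕ) : ZMod n)) ≠ 0 := by
      intro h0
      have := congrArg ZMod.val h0
      rw [v1, ZMod.val_zero] at this
      omega
    have v2 : (((y : ℕ) : ZMod n) - ((x : ℕ) : ZMod n)).val = n - (x - y) := by
      have e : ((y : ℕ) : ZMod n) - ((x : ℕ) : ZMod n) =
          -(((x : ℕ) : ZMod n) - ((y : ℕ) : ZMod n)) := by ring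
      rw [e, ZMod.neg_val, if_neg hne0, v1]
    rw [v1, v2, Nat.min_comm]

lemma marker_card [NeZero n] (A B : List Bool) (hA : 2 * A.length ≤ n)
    (hB : 2 * B.length ≤ n) :
    B.length - A.length ≤ (xset n A ∆ xset n B).ncard := by
  rcases le_or_gt B.length A.length with h | h
  · simp [Nat.sub_eq_zero_of_le h]
  · set S : Set (ZMod n) := (fun i : ℕ => ((2 * i : ℕ) : ZMod n)) '' Set.Ico A.length B.length
      with hS
    have hsub : S ⊆ xset n A ∆ xset n B := by
      rintro z ⟨i, hi, rfl⟩
      simp only [Set.mem_Ico] at hi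
      rw [Set.mem_symmDiff]
      right
      constructor
      · exact (mem_xset_even hB (by omega)).mpr hi.2
      · intro hmem
        have := (mem_xset_even hA (by omega)).mp hmem
        omega
    have hcard : S.ncard = B.length - A.length := by
      rw [hS, Set.ncard_image_of_injOn, ← Finset.coe_Ico, Set.ncard_coe_finset, Nat.card_Ico]
      intro i hi j hj hij
      simp only [Set.mem_Ico] at hi hj
      have := cast_inj_lt (show 2 * i < n by omega) (show 2 * j < n by omega) hij
      omega
    calc B.length - A.length = S.ncard := hcard.symm
      _ ≤ (xset n A ∆ xset n B).ncard := Set.ncard_le_ncard hsub (Set.toFinite _)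

lemma reach_asc [NeZero n] : ∀ (L K : List Bool), 2 * (K.length + L.length) < n →
    Reach n (psiL n K) (psiL n (K ++ L)) (4 * L.length) := by
  intro L
  induction L with
  | nil =>
    intro K _
    rw [List.append_nil]
    exact ⟨[], rfl, by simp, rfl⟩
  | cons b L ih =>
    intro K h
    simp only [List.length_cons] at h
    have hstep : Reach n (psiL n K) (psiL n (K ++ [b])) 4 := by
      refine ⟨[lampInv (lampT n), lampTA n, if b = true then lampTA n else lampT n, lampT n],
        rfl, ?_, asc_step (by omega)⟩
      intro s hs
      simp only [List.mem_cons, List.not_mem_nil, or_false] at hs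
      rcases hs with rfl | rfl | rfl | rfl
      · exact cond_of_isGen (Or.inr (Or.inr (Or.inl rfl)))
      · exact cond_of_isGen (Or.inr (Or.inl rfl))
      · cases b
        · exact cond_of_isGen (Or.inl (by simp))
        · exact cond_of_isGen (Or.inr (Or.inl (by simp)))
      · exact cond_of_isGen (Or.inl rfl)
    have h2 := ih (K ++ [b]) (by simp; omega)
    have h3 := reach_trans hstep h2
    rw [List.append_assoc, List.singleton_append] at h3
    have hnum : 4 + 4 * L.length = 4 * (b :: L).length := by
      simp [List.length_cons]
      omega
    rwa [hnum] at h3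

lemma upper [NeZero n] (A B : List Bool) (hA : 3 * A.length ≤ n) (hB : 3 * B.length ≤ n) :
    Reach n (psiL n A) (psiL n B)
      (4 * (A.length - lgc A B) + 4 * (B.length - lgc A B)) := by
  have hnpos : 0 < n := Nat.pos_of_neZero n
  set k := lgc A B with hk
  have hkA := lgc_le_left A B
  have hkB := lgc_le_right A B
  have r1 : Reach n (psiL n (A.take k)) (psiL n A) (4 * (A.length - k)) := by
    have hside : 2 * ((A.take k).length + (A.drop k).length) < n := by
      simp only [List.length_take, List.length_drop]; omega
    have h := reach_asc (n := n) (A.drop k) (A.take k) hside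
    rw [List.take_append_drop] at h
    simpa [List.length_drop] using h
  have r2 : Reach n (psiL n (A.take k)) (psiL n B) (4 * (B.length - k)) := by
    rw [hk, take_lgc A B, ← hk]
    have hside : 2 * ((B.take k).length + (B.drop k).length) < n := by
      simp only [List.length_take, List.length_drop]; omega
    have h := reach_asc (n := n) (B.drop k) (B.take k) hside
    rw [List.take_append_drop] at h
    simpa [List.length_drop] using h
  exact reach_trans (reach_symm r1) r2

lemma psiL_inj [NeZero n] {A B : List Bool} (hA : 3 * A.length ≤ n)
    (hB : 3 * B.length ≤ n) (h : psiL n A = psiL n B) : A = B := by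
  have hnpos : 0 < n := Nat.pos_of_neZero n
  have hpos : ((2 * A.length : ℕ) : ZMod n) = ((2 * B.length : ℕ) : ZMod n) :=
    congrArg Prod.snd h
  have hlen : A.length = B.length := by
    have := cast_inj_lt (show 2 * A.length < n by omega)
      (show 2 * B.length < n by omega) hpos
    omega
  have hset : xset n A = xset n B := congrArg Prod.fst h
  refine List.ext_getElem hlen ?_
  intro i h1 h2
  have e1 := mem_xset_odd (K := A) (n := n) (by omega) (show 2 * i + 1 < n by omega)
  have e2 := mem_xset_odd (K := B) (n := n) (by omega) (show 2 * i + 1 < n by omega)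
  rw [hset] at e1
  have hgd : A.getD i false = B.getD i false := by
    have hiff : (i < A.length ∧ A.getD i false = true) ↔
        (i < B.length ∧ B.getD i false = true) := e1.symm.trans e2
    rcases hA' : A.getD i false <;> rcases hB' : B.getD i false <;> simp_all
  rw [List.getD_eq_getElem _ _ h1, List.getD_eq_getElem _ _ h2] at hgd
  exact hgd

lemma dist_lower [NeZero n] (A B : List Bool) (hA : 3 * A.length ≤ n)
    (hB : 3 * B.length ≤ n) :
    A.length + B.length - 2 * lgc A B ≤ 2 * lampDist n (psiL n A) (psiL n B) := by
  have hnpos : 0 < n := Nat.pos_of_neZero n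
  have hup := upper A B hA hB
  have hne : {m | Reach n (psiL n A) (psiL n B) m}.Nonempty := ⟨_, hup⟩
  have hmem : Reach n (psiL n A) (psiL n B) (lampDist n (psiL n A) (psiL n B)) := by
    rw [lampDist_eq]; exact Nat.sInf_mem hne
  obtain ⟨w, hlen, hcond, hfold⟩ := hmem
  have hgen : ∀ s ∈ w, IsGen n s := fun s hs => isGen_of_cond (hcond s hs)
  set k := lgc A B with hk
  have hkA := lgc_le_left A B
  have hkB := lgc_le_right A B
  by_cases hc : k < A.length ∧ k < B.length
  · obtain ⟨h1, h2⟩ := hc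
    have hb1 : 2 * A.length ≤ n := by omega
    have hb2 : 2 * B.length ≤ n := by omega
    have hne' := getD_lgc A B h1 h2
    rw [← hk] at hne'
    have eA := mem_xset_odd (K := A) (n := n) hb1 (show 2 * k + 1 < n by omega)
    have eB := mem_xset_odd (K := B) (n := n) hb2 (show 2 * k + 1 < n by omega)
    have hpmem : ((2 * k + 1 : ℕ) : ZMod n) ∈ (psiL n A).1 ∆ (psiL n B).1 := by
      show ((2 * k + 1 : ℕ) : ZMod n) ∈ xset n A ∆ xset n B
      rw [Set.mem_symmDiff]
      rcases hA' : A.getD k false <;> rcases hB' : B.getD k false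
      · exact absurd (by rw [hA', hB']) hne'
      · right
        refine ⟨eB.mpr ⟨h2, hB'⟩, fun hm => ?_⟩
        have := (eA.mp hm).2
        rw [hA'] at this
        exact Bool.false_ne_true this
      · left
        refine ⟨eA.mpr ⟨h1, hA'⟩, fun hm => ?_⟩
        have := (eB.mp hm).2
        rw [hB'] at this
        exact Bool.false_ne_true this
      · exact absurd (by rw [hA', hB']) hne'
    rw [hfold] at hpmem
    have hv := visit w hgen (psiL n A) _ hpmem
    rw [← hfold] at hv
    have hvA : zdist ((2 * A.length : ℕ) : ZMod n) ((2 * k + 1 : ℕ) : ZMod n) +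
        zdist ((2 * k + 1 : ℕ) : ZMod n) ((2 * B.length : ℕ) : ZMod n) ≤ w.length := hv
    have d1 : A.length - k ≤
        zdist ((2 * A.length : ℕ) : ZMod n) ((2 * k + 1 : ℕ) : ZMod n) := by
      rw [zdist_cast (show 2 * A.length < n by omega) (show 2 * k + 1 < n by omega)
        (by omega)]
      omega
    have d2 : B.length - k ≤
        zdist ((2 * k + 1 : ℕ) : ZMod n) ((2 * B.length : ℕ) : ZMod n) := by
      rw [zdist_comm, zdist_cast (show 2 * B.length < n by omega)
        (show 2 * k + 1 < n by omega) (by omega)]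
      omega
    omega
  · have hor : k = A.length ∨ k = B.length := by omega
    have hcl : ((psiL n A).1 ∆ (psiL n B).1).ncard ≤ w.length := by
      rw [hfold]
      exact card_le w hgen (psiL n A)
    have hcl' : ((xset n A) ∆ (xset n B)).ncard ≤ w.length := hcl
    rcases hor with h | h
    · have hm := marker_card (n := n) A B (by omega) (by omega)
      omega
    · have hm := marker_card (n := n) B A (by omega) (by omega)
      rw [symmDiff_comm] at hm
      omega

end Aux4

/-- There is an absolute constant `C` such that for every `n` divisible by 6, the
Cayley graph of `Z₂ ≀ Z_n` (generating set `{t, ta}`) contains a subset bilipschitz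
equivalent, with distortion at most `C`, to the binary tree `T_{n/3}`. The subset is
the range of the bijection `ψ`. -/

theorem binary_tree_embeds_in_lamplighter :
    ∃ C : ℝ, 1 ≤ C ∧ ∀ n : ℕ, 0 < n → 6 ∣ n →
      ∃ (V : Set (Lamp n)) (r : ℝ) (ψ : {A : List Bool // A.length ≤ n / 3} → Lamp n),
        0 < r ∧ Function.Injective ψ ∧ Set.range ψ = V ∧
        ∀ s s' : {A : List Bool // A.length ≤ n / 3},
          r * (treeDist s.val s'.val : ℝ) ≤ (lampDist n (ψ s) (ψ s') : ℝ) ∧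
          (lampDist n (ψ s) (ψ s') : ℝ) ≤ C * r * (treeDist s.val s'.val : ℝ) := by
  refine ⟨8, by norm_num, ?_⟩
  intro n hn hdvd
  haveI : NeZero n := ⟨hn.ne'⟩
  have hbnd : ∀ A : {A : List Bool // A.length ≤ n / 3}, 3 * A.1.length ≤ n := by
    intro A
    have := A.2
    omega
  refine ⟨Set.range (fun s : {A : List Bool // A.length ≤ n / 3} => psiL n s.1),
    1 / 2, fun s => psiL n s.1, by norm_num, ?_, rfl, ?_⟩
  · intro s s' h
    exact Subtype.ext (psiL_inj (hbnd s) (hbnd s') h)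
  · intro s s'
    have hkA := lgc_le_left s.1 s'.1
    have hkB := lgc_le_right s.1 s'.1
    have hup : lampDist n (psiL n s.1) (psiL n s'.1) ≤
        4 * (s.1.length - lgc s.1 s'.1) + 4 * (s'.1.length - lgc s.1 s'.1) := by
      rw [lampDist_eq]
      exact Nat.sInf_le (upper s.1 s'.1 (hbnd s) (hbnd s'))
    have hupper : lampDist n (psiL n s.1) (psiL n s'.1) ≤ 4 * treeDist s.1 s'.1 := by
      have he : 4 * (s.1.length - lgc s.1 s'.1) + 4 * (s'.1.length - lgc s.1 s'.1) =
          4 * treeDist s.1 s'.1 := by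
        unfold treeDist
        omega
      omega
    have hlower : treeDist s.1 s'.1 ≤ 2 * lampDist n (psiL n s.1) (psiL n s'.1) := by
      have := dist_lower s.1 s'.1 (hbnd s) (hbnd s')
      unfold treeDist
      omega
    constructor
    · have h1 : (treeDist s.1 s'.1 : ℝ) ≤ 2 * (lampDist n (psiL n s.1) (psiL n s'.1) : ℝ) := by
        exact_mod_cast hlower
      show (1 / 2 : ℝ) * (treeDist s.1 s'.1 : ℝ) ≤ _
      linarith
    · have h1 : (lampDist n (psiL n s.1) (psiL n s'.1) : ℝ) ≤
          4 * (treeDist s.1 s'.1 : ℝ) := by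
        exact_mod_cast hupper
      show _ ≤ (8 : ℝ) * (1 / 2) * (treeDist s.1 s'.1 : ℝ)
      linarith
end

section
/- There exist a constant C ≥ 1, a subset V of the infinite lamplighter group Z_2 ≀ Z (with word metric ρ with respect to {t, ta}), a number r > 0, and a bijection ψ from the vertex set of the infinite rooted binary tree onto V such that r·d_T(s,s') ≤ ρ(ψ(s),ψ(s')) ≤ C·r·d_T(s,s') for all vertices s, s'; that is, the Cayley graph of Z_2 ≀ Z contains a bilipschitz copy of the infinite rooted binary tree. -/
open scoped symmDiff

/-- Elements of the infinite lamplighter group `Z₂ ≀ Z`: a finite set of lit lamps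
and a position. -/
abbrev LampZ := Finset ℤ × ℤ

/-- Group multiplication `(x,g)·(y,h) = (x △ (g+y), g+h)`. -/
def lampZMul (u v : LampZ) : LampZ :=
  (u.1 ∆ (v.1.image (u.2 + ·)), u.2 + v.2)

/-- Group inverse. -/
def lampZInv (u : LampZ) : LampZ :=
  (u.1.image (· - u.2), -u.2)

/-- The generator `t = (∅, 1)`. -/
def lampZT : LampZ := (∅, 1)

/-- The generator `a = ({0}, 0)`. -/
def lampZA : LampZ := ({0}, 0)

/-- The generator `ta`. -/
def lampZTA : LampZ := lampZMul lampZT lampZA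

/-- Word metric on `Z₂ ≀ Z` w.r.t. a generating set `S`. -/
noncomputable def wordDistZ (S : Set LampZ) (u v : LampZ) : ℕ :=
  sInf {m | ∃ w : List LampZ, w.length = m ∧
    (∀ s ∈ w, s ∈ S ∨ ∃ g ∈ S, s = lampZInv g) ∧ v = w.foldl lampZMul u}

/-- The word metric `ρ` on `Z₂ ≀ Z` w.r.t. `{t, ta}`. -/
noncomputable def lampZDist (u v : LampZ) : ℕ :=
  wordDistZ {lampZT, lampZTA} u v

/-! ### auxiliary development -/

def lamps (s : List Bool) : Finset ℤ :=
  ((Finset.range s.length).filter (fun i => s.getD i false = true)).image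
    (fun i : ℕ => (i : ℤ) + 1)

lemma mem_lamps' {s : List Bool} {m : ℤ} :
    m ∈ lamps s ↔ ∃ j : ℕ, j < s.length ∧ s.getD j false = true ∧ m = (j : ℤ) + 1 := by
  simp only [lamps, Finset.mem_image, Finset.mem_filter, Finset.mem_range]
  constructor
  · rintro ⟨i, ⟨hi, hb⟩, rfl⟩; exact ⟨i, hi, hb, rfl⟩
  · rintro ⟨j, hj, hb, rfl⟩; exact ⟨j, ⟨hj, hb⟩, rfl⟩

lemma mem_lamps {s : List Bool} {j : ℕ} :
    ((j : ℤ) + 1) ∈ lamps s ↔ j < s.length ∧ s.getD j false = true := by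
  rw [mem_lamps']
  constructor
  · rintro ⟨i, hi, hb, he⟩
    have : i = j := by omega
    subst this; exact ⟨hi, hb⟩
  · rintro ⟨h1, h2⟩; exact ⟨j, h1, h2, rfl⟩

lemma getD_snoc (p : List Bool) (b : Bool) (j : ℕ) :
    (p ++ [b]).getD j false =
      if j < p.length then p.getD j false else if j = p.length then b else false := by
  split_ifs with h1 h2
  · exact List.getD_append _ _ _ _ h1
  · subst h2
    rw [List.getD_append_right _ _ _ _ (le_refl _)]
    simp
  · exact List.getD_eq_default _ _ (by simp; omega)

lemma lamps_snoc (p : List Bool) (b : Bool) :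
    lamps (p ++ [b]) = lamps p ∆ (if b then {(p.length : ℤ) + 1} else ∅) := by
  have hnot : ((p.length : ℤ) + 1) ∉ lamps p := by simp [mem_lamps]
  cases b
  · simp only [Bool.false_eq_true, if_false]
    rw [show (∅ : Finset ℤ) = ⊥ from rfl, symmDiff_bot]
    ext m
    simp only [mem_lamps', List.length_append, List.length_singleton, getD_snoc]
    constructor
    · rintro ⟨j, hj, hb, rfl⟩
      by_cases h : j < p.length
      · exact ⟨j, h, by rwa [if_pos h] at hb, rfl⟩
      · rw [if_neg h] at hb; split_ifs at hb <;> simp at hb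
    · rintro ⟨j, hj, hb, rfl⟩
      exact ⟨j, by omega, by rwa [if_pos hj], rfl⟩
  · simp only [if_pos]
    ext m
    simp only [mem_lamps', Finset.mem_symmDiff, Finset.mem_singleton, getD_snoc,
      List.length_append, List.length_singleton]
    constructor
    · rintro ⟨j, hj, hb, rfl⟩
      by_cases h : j < p.length
      · left
        refine ⟨⟨j, h, by rwa [if_pos h] at hb, rfl⟩, ?_⟩
        intro he; omega
      · have hj' : j = p.length := by omega
        subst hj'
        right
        refine ⟨rfl, ?_⟩
        rintro ⟨j, hj, _, he⟩
        omega
    · rintro (⟨⟨j, h, hb, rfl⟩, _⟩ | ⟨rfl, _⟩)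
      · exact ⟨j, by omega, by rwa [if_pos h], rfl⟩
      · exact ⟨p.length, by omega, by simp, rfl⟩

lemma lampZTA_eq : lampZTA = ({1}, 1) := by
  show (∅ ∆ (({0} : Finset ℤ).image ((1 : ℤ) + ·)), (1 : ℤ) + 0) = ({1}, 1)
  rw [Finset.image_singleton]
  norm_num [bot_symmDiff]

lemma lampZInvT_eq : lampZInv lampZT = (∅, -1) := by
  simp [lampZInv, lampZT]

lemma lampZInvTA_eq : lampZInv lampZTA = ({0}, -1) := by
  rw [lampZTA_eq]
  simp [lampZInv]

def stepOf (b : Bool) : LampZ := if b then lampZTA else lampZT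
def istepOf (b : Bool) : LampZ := if b then lampZInv lampZTA else lampZInv lampZT

lemma mul_stepOf (x : Finset ℤ) (k : ℤ) (b : Bool) :
    lampZMul (x, k) (stepOf b) = (x ∆ (if b then {k + 1} else ∅), k + 1) := by
  cases b <;>
    simp [stepOf, lampZMul, lampZT, lampZTA_eq, Finset.image_singleton, bot_symmDiff,
      symmDiff_bot]

lemma mul_istepOf (x : Finset ℤ) (k : ℤ) (b : Bool) :
    lampZMul (x, k) (istepOf b) = (x ∆ (if b then {k} else ∅), k - 1) := by
  cases b <;>
    simp [istepOf, lampZMul, lampZInvT_eq, lampZInvTA_eq, Finset.image_singleton,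
      symmDiff_bot, sub_eq_add_neg]

def psiFun (s : List Bool) : LampZ := (lamps s, (s.length : ℤ))

lemma foldl_build : ∀ (q p : List Bool),
    List.foldl lampZMul (psiFun p) (q.map stepOf) = psiFun (p ++ q)
  | [], p => by simp [psiFun]
  | b :: q, p => by
    rw [List.map_cons, List.foldl_cons]
    have h1 : lampZMul (psiFun p) (stepOf b) = psiFun (p ++ [b]) := by
      show lampZMul (lamps p, (p.length : ℤ)) (stepOf b) = _
      rw [mul_stepOf, ← lamps_snoc]
      simp [psiFun]
    rw [h1, foldl_build q (p ++ [b])]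
    simp

lemma mul_istep_snoc (l : List Bool) (b : Bool) :
    lampZMul (psiFun (l ++ [b])) (istepOf b) = psiFun l := by
  show lampZMul (lamps (l ++ [b]), ((l ++ [b]).length : ℤ)) (istepOf b) = (lamps l, (l.length : ℤ))
  have hc : (((l ++ [b]).length : ℕ) : ℤ) = (l.length : ℤ) + 1 := by simp
  rw [mul_istepOf, lamps_snoc, hc]
  cases b
  · simp
  · simp [symmDiff_symmDiff_cancel_right]

lemma foldl_clear (p : List Bool) (q : List Bool) :
    List.foldl lampZMul (psiFun (p ++ q)) (q.reverse.map istepOf) = psiFun p := by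
  induction q using List.reverseRecOn with
  | nil => simp [psiFun]
  | append_singleton q b ih =>
    rw [List.reverse_append, List.reverse_singleton, List.singleton_append, List.map_cons,
      List.foldl_cons, show p ++ (q ++ [b]) = (p ++ q) ++ [b] from (List.append_assoc p q [b]).symm,
      mul_istep_snoc]
    exact ih

lemma lgc_le_left_s19 : ∀ a b : List Bool, lgc a b ≤ a.length
  | [], _ => by simp [lgc]
  | _ :: _, [] => by simp [lgc]
  | a :: as, b :: bs => by
    rw [lgc]
    split_ifs with h
    · simpa using lgc_le_left_s19 as bs
    · simp

lemma lgc_le_right_s19 : ∀ a b : List Bool, lgc a b ≤ b.length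
  | [], _ => by simp [lgc]
  | _ :: _, [] => by simp [lgc]
  | a :: as, b :: bs => by
    rw [lgc]
    split_ifs with h
    · simpa using lgc_le_right_s19 as bs
    · simp

lemma take_lgc_s19 : ∀ a b : List Bool, a.take (lgc a b) = b.take (lgc a b)
  | [], b => by simp [lgc]
  | a :: as, [] => by simp [lgc]
  | a :: as, b :: bs => by
    by_cases h : a = b
    · subst h
      simp [lgc, take_lgc_s19 as bs]
    · simp [lgc, h]

lemma lgc_cases : ∀ a b : List Bool, lgc a b = a.length ∨ lgc a b = b.length ∨
    a.getD (lgc a b) false ≠ b.getD (lgc a b) false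
  | [], b => Or.inl (by simp [lgc])
  | a :: as, [] => Or.inr (Or.inl (by simp [lgc]))
  | a :: as, b :: bs => by
    by_cases h : a = b
    · subst h
      rcases lgc_cases as bs with h1 | h1 | h1
      · left; simp [lgc, h1]
      · right; left; simp [lgc, h1]
      · right; right; simpa [lgc] using h1
    · right; right; simpa [lgc, h] using h

/-! ### the potential function for the lower bound -/

def Dpot (y : Finset ℤ) (c n' : ℤ) (u : LampZ) : ℕ :=
  if (c + 1) ∈ u.1 ∆ y then (u.2 - c).natAbs + (n' - c).natAbs else (u.2 - n').natAbs

lemma toggle_mem (x y : Finset ℤ) (m a : ℤ) (h : a ≠ m) :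
    (a ∈ (x ∆ {m}) ∆ y) ↔ a ∈ x ∆ y := by
  simp only [Finset.mem_symmDiff, Finset.mem_singleton, h]
  tauto

lemma toggle_mem_self (x y : Finset ℤ) (a : ℤ) :
    (a ∈ (x ∆ {a}) ∆ y) ↔ ¬ (a ∈ x ∆ y) := by
  by_cases hx : a ∈ x <;> by_cases hy : a ∈ y <;>
    simp [Finset.mem_symmDiff, Finset.mem_singleton, hx, hy]

lemma Dpot_step (y : Finset ℤ) (c n' : ℤ) (u : LampZ) (g : LampZ)
    (hg : g ∈ ({lampZT, lampZTA} : Set LampZ) ∨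
      ∃ h ∈ ({lampZT, lampZTA} : Set LampZ), g = lampZInv h) :
    Dpot y c n' u ≤ Dpot y c n' (lampZMul u g) + 1 := by
  obtain ⟨x, k⟩ := u
  have hcases : g = lampZT ∨ g = lampZTA ∨ g = lampZInv lampZT ∨ g = lampZInv lampZTA := by
    rcases hg with hg | ⟨h, hh, rfl⟩
    · rcases hg with rfl | rfl
      · tauto
      · tauto
    · rcases hh with rfl | rfl
      · tauto
      · tauto
  rcases hcases with rfl | rfl | rfl | rfl
  · have hmul : lampZMul (x, k) lampZT = (x, k + 1) := by
      simp [lampZMul, lampZT, symmDiff_bot]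
    rw [hmul]
    unfold Dpot
    dsimp only
    split_ifs <;> omega
  · have hmul : lampZMul (x, k) lampZTA = (x ∆ {k + 1}, k + 1) := by
      rw [lampZTA_eq]
      simp [lampZMul, Finset.image_singleton]
    rw [hmul]
    unfold Dpot
    dsimp only
    by_cases hk : (c + 1) = k + 1
    · have hk' : c = k := by omega
      subst hk'
      by_cases hP : (c + 1) ∈ x ∆ y
      · rw [if_pos hP, if_neg (by rw [toggle_mem_self]; exact not_not_intro hP)]
        omega
      · rw [if_neg hP, if_pos (by rw [toggle_mem_self]; exact hP)]
        omega
    · rw [if_congr (toggle_mem x y (k + 1) (c + 1) hk) rfl rfl]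
      split_ifs <;> omega
  · have hmul : lampZMul (x, k) (lampZInv lampZT) = (x, k + -1) := by
      rw [lampZInvT_eq]
      simp [lampZMul, symmDiff_bot]
    rw [hmul]
    unfold Dpot
    dsimp only
    split_ifs <;> omega
  · have hmul : lampZMul (x, k) (lampZInv lampZTA) = (x ∆ {k}, k + -1) := by
      rw [lampZInvTA_eq]
      simp [lampZMul, Finset.image_singleton]
    rw [hmul]
    unfold Dpot
    dsimp only
    by_cases hk : (c + 1) = k
    · subst hk
      by_cases hP : (c + 1) ∈ x ∆ y
      · rw [if_pos hP, if_neg (by rw [toggle_mem_self]; exact not_not_intro hP)]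
        omega
      · rw [if_neg hP, if_pos (by rw [toggle_mem_self]; exact hP)]
        omega
    · rw [if_congr (toggle_mem x y k (c + 1) hk) rfl rfl]
      split_ifs <;> omega

lemma Dpot_le (y : Finset ℤ) (c n' : ℤ) :
    ∀ (w : List LampZ) (u : LampZ),
      (∀ g ∈ w, g ∈ ({lampZT, lampZTA} : Set LampZ) ∨
        ∃ h ∈ ({lampZT, lampZTA} : Set LampZ), g = lampZInv h) →
      List.foldl lampZMul u w = (y, n') → Dpot y c n' u ≤ w.length
  | [], u, _, hf => by
    simp only [List.foldl_nil] at hf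
    subst hf
    simp [Dpot, symmDiff_self]
  | g :: w, u, hmem, hf => by
    have h1 := Dpot_step y c n' u g (hmem g (by simp))
    have h2 := Dpot_le y c n' w (lampZMul u g)
      (fun g' hg' => hmem g' (by simp [hg'])) (by simpa using hf)
    simp only [List.length_cons]
    omega

/-! ### the distance computation -/

lemma psi_dist (s s' : List Bool) : lampZDist (psiFun s) (psiFun s') = treeDist s s' := by
  have hcs : lgc s s' ≤ s.length := lgc_le_left_s19 s s'
  have hcs' : lgc s s' ≤ s'.length := lgc_le_right_s19 s s'
  set W : List LampZ :=
    ((s.drop (lgc s s')).reverse.map istepOf) ++ ((s'.drop (lgc s s')).map stepOf) with hW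
  have hWlen : W.length = treeDist s s' := by
    simp only [hW, treeDist, List.length_append, List.length_map, List.length_reverse,
      List.length_drop]
    omega
  have hWmem : ∀ g ∈ W, g ∈ ({lampZT, lampZTA} : Set LampZ) ∨
      ∃ h ∈ ({lampZT, lampZTA} : Set LampZ), g = lampZInv h := by
    intro g hg
    simp only [hW, List.mem_append, List.mem_map] at hg
    rcases hg with ⟨b, _, rfl⟩ | ⟨b, _, rfl⟩
    · right
      cases b
      · exact ⟨lampZT, by simp, by simp [istepOf]⟩
      · exact ⟨lampZTA, by simp, by simp [istepOf]⟩
    · left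
      cases b <;> simp [stepOf]
  have hWfold : List.foldl lampZMul (psiFun s) W = psiFun s' := by
    rw [hW, List.foldl_append]
    have h1 : List.foldl lampZMul (psiFun s) ((s.drop (lgc s s')).reverse.map istepOf)
        = psiFun (s.take (lgc s s')) := by
      have h := foldl_clear (s.take (lgc s s')) (s.drop (lgc s s'))
      rwa [List.take_append_drop] at h
    rw [h1, take_lgc_s19 s s']
    have h := foldl_build (s'.drop (lgc s s')) (s'.take (lgc s s'))
    rwa [List.take_append_drop] at h
  have hub : lampZDist (psiFun s) (psiFun s') ≤ treeDist s s' := by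
    apply Nat.sInf_le
    exact ⟨W, hWlen, hWmem, hWfold.symm⟩
  have hDinit : Dpot (lamps s') ((lgc s s' : ℤ)) ((s'.length : ℤ)) (psiFun s)
      = treeDist s s' := by
    rcases lgc_cases s s' with h | h | h
    · have hns : ¬ (((lgc s s' : ℤ)) + 1 ∈ lamps s) := by
        rw [mem_lamps]; omega
      unfold Dpot psiFun
      dsimp only
      unfold treeDist
      split_ifs <;> omega
    · have hns' : ¬ (((lgc s s' : ℤ)) + 1 ∈ lamps s') := by
        rw [mem_lamps]; omega
      unfold Dpot psiFun
      dsimp only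
      unfold treeDist
      split_ifs with hQ
      · rw [Finset.mem_symmDiff] at hQ
        rcases hQ with ⟨hq1, _⟩ | ⟨hq1, _⟩
        · rw [mem_lamps] at hq1
          omega
        · exact absurd hq1 hns'
      · rw [Finset.mem_symmDiff] at *
        push_neg at *
        omega
    · have hQ : (((lgc s s' : ℤ)) + 1) ∈ lamps s ∆ lamps s' := by
        rw [Finset.mem_symmDiff, mem_lamps, mem_lamps]
        by_cases hb : s.getD (lgc s s') false = true
        · left
          have hlt : lgc s s' < s.length := by
            by_contra hlt
            rw [List.getD_eq_default _ _ (by omega)] at hb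
            exact Bool.false_ne_true hb
          refine ⟨⟨hlt, hb⟩, ?_⟩
          rintro ⟨_, hb'⟩
          exact h (hb.trans hb'.symm)
        · right
          have hb0 : s.getD (lgc s s') false = false := by
            simpa using hb
          have hb' : s'.getD (lgc s s') false = true := by
            rcases Bool.eq_false_or_eq_true (s'.getD (lgc s s') false) with h2 | h2
            · exact h2
            · exact absurd (hb0.trans h2.symm) h
          have hlt : lgc s s' < s'.length := by
            by_contra hlt
            rw [List.getD_eq_default _ _ (by omega)] at hb'
            exact Bool.false_ne_true hb'
          exact ⟨⟨hlt, hb'⟩, fun hc => hb hc.2⟩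
      unfold Dpot psiFun
      dsimp only
      rw [if_pos hQ]
      unfold treeDist
      omega
  -- lower bound
  have hne : ({m | ∃ w : List LampZ, w.length = m ∧
      (∀ g ∈ w, g ∈ ({lampZT, lampZTA} : Set LampZ) ∨
        ∃ h ∈ ({lampZT, lampZTA} : Set LampZ), g = lampZInv h) ∧
      psiFun s' = w.foldl lampZMul (psiFun s)} : Set ℕ).Nonempty :=
    ⟨W.length, W, rfl, hWmem, hWfold.symm⟩
  have hmem := Nat.sInf_mem hne
  obtain ⟨w, hwlen, hwmem, hwfold⟩ := hmem
  have hlb : treeDist s s' ≤ w.length := by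
    rw [← hDinit]
    exact Dpot_le (lamps s') _ _ w (psiFun s) hwmem hwfold.symm
  have : lampZDist (psiFun s) (psiFun s') = sInf {m | ∃ w : List LampZ, w.length = m ∧
      (∀ g ∈ w, g ∈ ({lampZT, lampZTA} : Set LampZ) ∨
        ∃ h ∈ ({lampZT, lampZTA} : Set LampZ), g = lampZInv h) ∧
      psiFun s' = w.foldl lampZMul (psiFun s)} := rfl
  omega

lemma lampZDist_self (u : LampZ) : lampZDist u u = 0 := by
  have h0 : (0 : ℕ) ∈ {m | ∃ w : List LampZ, w.length = m ∧
      (∀ g ∈ w, g ∈ ({lampZT, lampZTA} : Set LampZ) ∨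
        ∃ h ∈ ({lampZT, lampZTA} : Set LampZ), g = lampZInv h) ∧
      u = w.foldl lampZMul u} := ⟨[], rfl, by simp, rfl⟩
  exact Nat.le_zero.mp (Nat.sInf_le h0)


/-- The Cayley graph of `Z₂ ≀ Z` (generating set `{t, ta}`) contains a bilipschitz
copy of the infinite rooted binary tree; the copy is the range of the bijection `ψ`. -/
theorem infinite_binary_tree_embeds_in_lamplighter :
    ∃ (C : ℝ) (V : Set LampZ) (r : ℝ) (ψ : List Bool → LampZ),
      1 ≤ C ∧ 0 < r ∧ Function.Injective ψ ∧ Set.range ψ = V ∧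
      ∀ s s' : List Bool,
        r * (treeDist s s' : ℝ) ≤ (lampZDist (ψ s) (ψ s') : ℝ) ∧
        (lampZDist (ψ s) (ψ s') : ℝ) ≤ C * r * (treeDist s s' : ℝ) := by
  refine ⟨1, Set.range psiFun, 1, psiFun, le_refl 1, one_pos, ?_, rfl, ?_⟩
  · intro s s' h
    have heq := psi_dist s s'
    rw [h, lampZDist_self] at heq
    have h1 := lgc_le_left_s19 s s'
    have h2 := lgc_le_right_s19 s s'
    have h3 : lgc s s' = s.length ∧ lgc s s' = s'.length := by
      unfold treeDist at heq
      omega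
    calc s = s.take (lgc s s') := by rw [h3.1, List.take_length]
    _ = s'.take (lgc s s') := take_lgc_s19 s s'
    _ = s' := by rw [h3.2, List.take_length]
  · intro s s'
    rw [psi_dist]
    constructor <;> norm_num
end
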